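/- Let θ ∈ (0,1], a ∈ (0,1) and b > 1 − a, let f be the pgf of PF(θ,a,b), and set q = 1 − ((1−a)/b)^{1/θ} ∈ (0,1), the extinction probability of the associated supercritical Galton–Watson process. Then: (i) the Harris–Sevastyanov transform g(s) = f(qs)/q satisfies (q^{−1} − g(s))^{−θ} = a·(q^{−1} − s)^{−θ} + b·q^θ for s ∈ [0,1], i.e. the individuals with finite line of descent, conditioned on extinction, reproduce according to the power-fractional law PF(θ, q^{−1}, a, b·q^θ); and (ii) the function h(s) = (f(q + (1−q)s) − q)/(1−q) satisfies (1 − h(s))^{−θ} = a·(1−s)^{−θ} + (1−a) for s ∈ [0,1), i.e. the individuals with infinite line of descent, conditioned on survival, reproduce according to PF₊(θ,a) = PF(θ, a, 1−a). -/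

import Mathlib

/-- decomposition of a supercritical power-fractional Galton-Watson process.
With `f` the pgf of `PF(θ,a,b)` (`a ∈ (0,1)`, `b > 1-a`) and extinction probability
`q = 1 - ((1-a)/b)^(1/θ) ∈ (0,1)`:
(i) the Harris-Sevastyanov transform `g(s) = f(qs)/q` satisfies
`(q⁻¹ - g(s))^(-θ) = a (q⁻¹ - s)^(-θ) + b q^θ` (offspring law `PF(θ, q⁻¹, a, b q^θ)` of the
individuals with finite line of descent, conditioned on extinction), and
(ii) `h(s) = (f(q + (1-q)s) - q)/(1-q)` satisfies
`(1 - h(s))^(-θ) = a (1-s)^(-θ) + (1-a)` (offspring law `PF₊(θ,a) = PF(θ,a,1-a)` of the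
individuals with infinite line of descent, conditioned on survival). -/
theorem pf_supercritical_decomposition (θ a b : ℝ) (hθ : θ ∈ Set.Ioc (0:ℝ) 1)
    (ha : a ∈ Set.Ioo (0:ℝ) 1) (hb : 1 - a < b) (f : ℝ → ℝ)
    (hf : ∀ s ∈ Set.Ico (0:ℝ) 1, f s = 1 - (a * (1 - s) ^ (-θ) + b) ^ (-1/θ)) :
    (1 - ((1 - a) / b) ^ (1/θ)) ∈ Set.Ioo (0:ℝ) 1 ∧
    (∀ q : ℝ, q = 1 - ((1 - a) / b) ^ (1/θ) →
      (∀ s ∈ Set.Icc (0:ℝ) 1,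
        (q⁻¹ - f (q * s) / q) ^ (-θ) = a * (q⁻¹ - s) ^ (-θ) + b * q ^ θ) ∧
      (∀ s ∈ Set.Ico (0:ℝ) 1,
        (1 - (f (q + (1 - q) * s) - q) / (1 - q)) ^ (-θ)
          = a * (1 - s) ^ (-θ) + (1 - a))) := by
  obtain ⟨hθ0, hθ1⟩ := hθ
  obtain ⟨ha0, ha1⟩ := ha
  have hθne : θ ≠ 0 := ne_of_gt hθ0
  have hb0 : (0:ℝ) < b := lt_trans (by linarith) hb
  have hc0 : (0:ℝ) < (1 - a) / b := div_pos (by linarith) hb0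
  have hc1 : (1 - a) / b < 1 := (div_lt_one hb0).2 hb
  set r := ((1 - a) / b) ^ (1/θ) with hr
  have hr0 : 0 < r := Real.rpow_pos_of_pos hc0 _
  have hr1 : r < 1 := Real.rpow_lt_one hc0.le hc1 (by positivity)
  have hrθ : r ^ θ = (1 - a) / b := by
    rw [hr, ← Real.rpow_mul hc0.le, one_div, inv_mul_cancel₀ hθne, Real.rpow_one]
  have key : ∀ x : ℝ, 0 < x → (x ^ (-1/θ)) ^ (-θ) = x := by
    intro x hx
    rw [← Real.rpow_mul hx.le, show (-1/θ) * (-θ) = 1 by field_simp, Real.rpow_one]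
  have key2 : ∀ u c : ℝ, 0 < u → 0 < c → (u ^ (-1/θ) / c) ^ (-θ) = u * c ^ θ := by
    intro u c hu hc
    rw [Real.div_rpow (by positivity) hc.le, key u hu, Real.rpow_neg hc.le, div_eq_mul_inv, inv_inv]
  refine ⟨⟨by linarith, by linarith⟩, ?_⟩
  intro q hq
  have hq0 : 0 < q := by rw [hq]; linarith
  have hq1 : q < 1 := by rw [hq]; linarith
  constructor
  · intro s hs
    obtain ⟨hs0, hs1⟩ := hs
    have hqs : q * s ∈ Set.Ico (0:ℝ) 1 := by
      constructor
      · positivity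
      · nlinarith
    have h1qs : 0 < 1 - q * s := by
      have := hqs.2; linarith
    have hX : 0 < a * (1 - q * s) ^ (-θ) + b := by positivity
    rw [hf _ hqs]
    have hbase : q⁻¹ - (1 - (a * (1 - q * s) ^ (-θ) + b) ^ (-1/θ)) / q
        = (a * (1 - q * s) ^ (-θ) + b) ^ (-1/θ) / q := by
      field_simp
      ring
    rw [hbase, key2 _ _ hX hq0]
    have hinv : q⁻¹ - s = (1 - q * s) / q := by
      field_simp
    rw [hinv, Real.div_rpow h1qs.le hq0.le, Real.rpow_neg hq0.le, div_eq_mul_inv, inv_inv]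
    ring
  · intro s hs
    obtain ⟨hs0, hs1⟩ := hs
    have ht : q + (1 - q) * s ∈ Set.Ico (0:ℝ) 1 := by
      constructor
      · nlinarith
      · nlinarith
    have h1t : 1 - (q + (1 - q) * s) = r * (1 - s) := by
      rw [hq]; ring
    have h1s : (0:ℝ) < 1 - s := by linarith
    have h1t0 : 0 < 1 - (q + (1 - q) * s) := by
      rw [h1t]; positivity
    have hX : 0 < a * (1 - (q + (1 - q) * s)) ^ (-θ) + b := by positivity
    rw [hf _ ht]
    have h1qr : 1 - q = r := by rw [hq]; ring
    have hbase : 1 - ((1 - (a * (1 - (q + (1 - q) * s)) ^ (-θ) + b) ^ (-1/θ)) - q) / (1 - q)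
        = (a * (1 - (q + (1 - q) * s)) ^ (-θ) + b) ^ (-1/θ) / (1 - q) := by
      have : (1:ℝ) - q ≠ 0 := by linarith
      field_simp
      ring
    have hX' : 0 < a * (r * (1 - s)) ^ (-θ) + b := by positivity
    rw [hbase, h1t, h1qr, key2 _ _ hX' hr0,
      Real.mul_rpow hr0.le h1s.le, hrθ]
    have hrθ' : r ^ (-θ) = b / (1 - a) := by
      rw [Real.rpow_neg hr0.le, hrθ, inv_div]
    rw [hrθ']
    have h1a : (1:ℝ) - a ≠ 0 := by linarith
    field_simp
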